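/- If the lengths (λ_α)_{α∈A} of an interval exchange map T with admissible combinatorial data are rationally independent, then T satisfies Keane's condition: no orbit segment starts and ends with a discontinuity. -/

import Mathlib

open MeasureTheory Finset

/-- Combinatorial and metric data of an interval exchange map:
two maps `p0, p1 : A → Fin d` (0-indexed versions of the bijections
`π₀, π₁ : A → {1,…,d}`) and lengths `len : A → ℝ`. -/
structure IEMData (A : Type) (d : ℕ) where
  p0 : A → Fin d
  p1 : A → Fin d
  len : A → ℝ

namespace IEM

variable {A : Type} [Fintype A] [DecidableEq A] {d : ℕ}

/-- Admissibility of the pair `(p0, p1)`: for all `1 ≤ k < d`, the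
preimages of `{1,…,k}` under `π₀` and `π₁` differ. -/
def Admissible (p0 p1 : A → Fin d) : Prop :=
  ∀ k : ℕ, 0 < k → k < d → {α : A | (p0 α : ℕ) < k} ≠ {α : A | (p1 α : ℕ) < k}

/-- The data is that of a genuine interval exchange map: both maps are
bijections, all lengths are positive, and the pair is admissible. -/
def GoodData (D : IEMData A d) : Prop :=
  Function.Bijective D.p0 ∧ Function.Bijective D.p1 ∧ (∀ α, 0 < D.len α) ∧
    Admissible D.p0 D.p1

/-- Left endpoint of the interval `I_α` (in the domain ordering `π₀`). -/
def leftPt0 (D : IEMData A d) (α : A) : ℝ :=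
  ∑ β ∈ univ.filter (fun β => D.p0 β < D.p0 α), D.len β

/-- Left endpoint of the image interval of `I_α` (in the range ordering `π₁`). -/
def leftPt1 (D : IEMData A d) (α : A) : ℝ :=
  ∑ β ∈ univ.filter (fun β => D.p1 β < D.p1 α), D.len β

/-- The interval `I_α = [Σ_{π₀β<π₀α} λ_β, Σ_{π₀β≤π₀α} λ_β)`. -/
def Iset (D : IEMData A d) (α : A) : Set ℝ :=
  Set.Ico (leftPt0 D α) (leftPt0 D α + D.len α)

/-- Total length `Σ_α λ_α`. -/
def totalLen (D : IEMData A d) : ℝ := ∑ α, D.len α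

/-- `T` is the interval exchange map of the data `D`:
on each `I_α`, `T` translates by `leftPt1 D α - leftPt0 D α`, i.e.
`T(x + Σ_{π₀β<π₀α} λ_β) = x + Σ_{π₁β<π₁α} λ_β` for `0 ≤ x < λ_α`. -/
def IsIEMOf (T : ℝ → ℝ) (D : IEMData A d) : Prop :=
  ∀ α : A, ∀ x ∈ Iset D α, T x = x - leftPt0 D α + leftPt1 D α

/-- Keane's condition: no orbit segment of `T` starts and ends at a
discontinuity (the nonzero left endpoints of the `I_α`). -/
def KeaneCond (T : ℝ → ℝ) (D : IEMData A d) : Prop :=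
  ∀ n : ℕ, 1 ≤ n → ∀ α β : A, leftPt0 D α ≠ 0 → leftPt0 D β ≠ 0 →
    T^[n] (leftPt0 D α) ≠ leftPt0 D β

end IEM

open IEM

section Aux

variable {A : Type} [Fintype A] [DecidableEq A] {d : ℕ}

/-- generic: sum over filter (p · < p γ) plus len γ is at most total -/
lemma keane_aux_le_total (p : A → Fin d) (len : A → ℝ) (hpos : ∀ δ, 0 < len δ) (γ : A) :
    (∑ δ ∈ univ.filter (fun δ => p δ < p γ), len δ) + len γ ≤ ∑ δ, len δ := by
  have hγ : γ ∉ univ.filter (fun δ => p δ < p γ) := by simp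
  calc (∑ δ ∈ univ.filter (fun δ => p δ < p γ), len δ) + len γ
      = ∑ δ ∈ insert γ (univ.filter (fun δ => p δ < p γ)), len δ := by
        rw [Finset.sum_insert hγ]; ring
    _ ≤ ∑ δ, len δ :=
        Finset.sum_le_sum_of_subset_of_nonneg (Finset.subset_univ _)
          (fun i _ _ => (hpos i).le)

lemma keane_aux_nonneg (p : A → Fin d) (len : A → ℝ) (hpos : ∀ δ, 0 < len δ) (γ : A) :
    0 ≤ ∑ δ ∈ univ.filter (fun δ => p δ < p γ), len δ :=
  Finset.sum_nonneg fun i _ => (hpos i).le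

/-- disjointness / uniqueness of the intervals -/
lemma keane_Iset_unique {D : IEMData A d} (hD : GoodData D) {x : ℝ} {γ γ' : A}
    (h : x ∈ Iset D γ) (h' : x ∈ Iset D γ') : γ = γ' := by
  obtain ⟨h0inj, -, hpos, -⟩ := hD
  by_contra hne
  have key : ∀ a b : A, D.p0 a < D.p0 b → x ∈ Iset D a → x ∈ Iset D b → False := by
    intro a b hab ha hb
    have hsub : insert a (univ.filter (fun δ => D.p0 δ < D.p0 a))
        ⊆ univ.filter (fun δ => D.p0 δ < D.p0 b) := by
      intro δ hδ
      simp only [Finset.mem_insert, Finset.mem_filter, Finset.mem_univ, true_and] at *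
      rcases hδ with rfl | hδ
      · exact hab
      · exact lt_trans hδ hab
    have ha' : a ∉ univ.filter (fun δ => D.p0 δ < D.p0 a) := by simp
    have hle : leftPt0 D a + D.len a ≤ leftPt0 D b := by
      have := Finset.sum_le_sum_of_subset_of_nonneg hsub
        (fun i _ _ => (hpos i).le)
      rw [Finset.sum_insert ha'] at this
      unfold leftPt0
      linarith
    have h1 := ha.2
    have h2 := hb.1
    linarith
  rcases lt_trichotomy (D.p0 γ) (D.p0 γ') with hlt | heq | hgt
  · exact key _ _ hlt h h'
  · exact hne (h0inj.1 heq)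
  · exact key _ _ hgt h' h

/-- every point of [0, total) is in some interval -/
lemma keane_exists_Iset {D : IEMData A d} (hD : GoodData D) (hd0 : 0 < d) {x : ℝ}
    (hx0 : 0 ≤ x) (hxT : x < totalLen D) : ∃ γ, x ∈ Iset D γ := by
  obtain ⟨h0, -, hpos, -⟩ := hD
  set S : Finset A := univ.filter (fun γ => leftPt0 D γ ≤ x) with hS
  obtain ⟨γ₀, hγ₀⟩ := h0.2 ⟨0, hd0⟩
  have hγ₀S : γ₀ ∈ S := by
    have : leftPt0 D γ₀ = 0 := by
      unfold leftPt0
      rw [Finset.sum_eq_zero_iff_of_nonneg (fun i _ => (hpos i).le)]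
      intro i hi
      simp only [Finset.mem_filter, hγ₀] at hi
      exact absurd hi.2 (by simp [Fin.lt_def])
    simp [hS, this, hx0]
  obtain ⟨γ, hγS, hmax⟩ := Finset.exists_max_image S (fun γ => (D.p0 γ : ℕ)) ⟨γ₀, hγ₀S⟩
  refine ⟨γ, by simpa [hS] using hγS, ?_⟩
  by_contra hcon
  push_neg at hcon
  by_cases hlast : (D.p0 γ : ℕ) + 1 = d
  · -- γ is the last interval: leftPt0 γ + len γ = total
    have huniv : insert γ (univ.filter (fun δ => D.p0 δ < D.p0 γ)) = univ := by
      apply Finset.eq_univ_of_forall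
      intro δ
      rcases eq_or_ne δ γ with rfl | hδγ
      · exact Finset.mem_insert_self _ _
      · apply Finset.mem_insert_of_mem
        simp only [Finset.mem_filter, Finset.mem_univ, true_and, Fin.lt_def]
        have : D.p0 δ ≠ D.p0 γ := fun hc => hδγ (h0.1 hc)
        have h2 : (D.p0 δ : ℕ) ≠ (D.p0 γ : ℕ) := fun hc => this (Fin.ext hc)
        have := (D.p0 δ).isLt
        omega
    have heq2 : leftPt0 D γ + D.len γ = totalLen D := by
      have h3 := Finset.sum_insert (s := univ.filter (fun δ => D.p0 δ < D.p0 γ))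
        (f := D.len) (a := γ) (by simp)
      rw [huniv] at h3
      unfold leftPt0 totalLen
      rw [h3]; ring
    linarith
  · have hlt : (D.p0 γ : ℕ) + 1 < d := by have := (D.p0 γ).isLt; omega
    obtain ⟨γ', hγ'⟩ := h0.2 ⟨(D.p0 γ : ℕ) + 1, hlt⟩
    have hins : univ.filter (fun δ => D.p0 δ < D.p0 γ')
        = insert γ (univ.filter (fun δ => D.p0 δ < D.p0 γ)) := by
      ext δ
      simp only [Finset.mem_filter, Finset.mem_univ, true_and, Finset.mem_insert,
        Fin.lt_def, hγ']
      constructor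
      · intro hδ
        rcases Nat.lt_succ_iff_lt_or_eq.mp hδ with h | h
        · exact Or.inr h
        · exact Or.inl (h0.1 (Fin.ext h))
      · rintro (rfl | hδ) <;> omega
    have hγ'left : leftPt0 D γ' = leftPt0 D γ + D.len γ := by
      unfold leftPt0
      rw [hins, Finset.sum_insert (by simp)]
      ring
    have hγ'S : γ' ∈ S := by
      simp only [hS, Finset.mem_filter, Finset.mem_univ, true_and]
      linarith
    have := hmax γ' hγ'S
    rw [hγ'] at this
    simp at this

end Aux


section Comb

variable {A : Type} [Fintype A] [DecidableEq A] {d : ℕ}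

/-- a downward-closed predicate pulled back by a bijection to Fin d -/
lemma keane_lower_count (q : A → Fin d) (hq : Function.Bijective q)
    (P : Fin d → Prop) [DecidablePred P] (hP : ∀ t t' : Fin d, t' ≤ t → P t → P t') :
    ∀ ε : A, ε ∈ univ.filter (fun ε => P (q ε)) ↔
      (q ε : ℕ) < (univ.filter (fun ε => P (q ε))).card := by
  set S : Finset A := univ.filter (fun ε => P (q ε)) with hS
  set L : Finset (Fin d) := univ.filter P with hL
  have hcardSL : S.card = L.card := by
    apply Finset.card_bij (fun a _ => q a)
    · intro a ha
      simp only [hS, Finset.mem_filter, Finset.mem_univ, true_and] at ha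
      simp [hL, ha]
    · intro a _ b _ hab
      exact hq.1 hab
    · intro t ht
      obtain ⟨a, rfl⟩ := hq.2 t
      simp only [hL, Finset.mem_filter, Finset.mem_univ, true_and] at ht
      exact ⟨a, by simp [hS, ht], rfl⟩
  have hlower : ∀ t : Fin d, t ∈ L ↔ (t : ℕ) < L.card := by
    intro t
    constructor
    · intro ht
      have hsub : Finset.Iic t ⊆ L := by
        intro s hs
        simp only [Finset.mem_Iic] at hs
        simp only [hL, Finset.mem_filter, Finset.mem_univ, true_and] at ht ⊢
        exact hP t s hs ht
      have := Finset.card_le_card hsub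
      rw [Fin.card_Iic] at this
      omega
    · intro ht
      by_contra hc
      have hsub : L ⊆ Finset.Iio t := by
        intro s hs
        simp only [Finset.mem_Iio]
        by_contra hst
        push_neg at hst
        simp only [hL, Finset.mem_filter, Finset.mem_univ, true_and] at hs hc
        exact hc (hP s t hst hs)
      have := Finset.card_le_card hsub
      rw [Fin.card_Iio] at this
      omega
  intro ε
  rw [hcardSL]
  constructor
  · intro hε
    simp only [hS, Finset.mem_filter, Finset.mem_univ, true_and] at hε
    exact (hlower (q ε)).1 (by simp [hL, hε])
  · intro hε
    have := (hlower (q ε)).2 hε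
    simp only [hL, Finset.mem_filter, Finset.mem_univ, true_and] at this
    simp [hS, this]

/-- the combinatorial core lemma -/
lemma keane_comb {n : ℕ} (p0 p1 : A → Fin d)
    (h0 : Function.Bijective p0) (h1 : Function.Bijective p1)
    (hadm : Admissible p0 p1) (hcard : Fintype.card A = d)
    (u v : ℕ → A) (hn : 1 ≤ n)
    (hw : ∃ j, j < n ∧ 0 < (p0 (v j) : ℕ))
    (hEq : ∀ δ : A, ((Finset.range n).filter (fun j => p1 δ < p1 (u j))).card
                 = ((Finset.range n).filter (fun j => p0 δ < p0 (v j))).card) : False := by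
  obtain ⟨j₀, hj₀n, hj₀⟩ := hw
  have hd0 : 0 < d := (p0 (v j₀)).pos
  set F : Fin d → ℕ := fun t => ((Finset.range n).filter (fun j => t < p1 (u j))).card with hF
  set G : Fin d → ℕ := fun t => ((Finset.range n).filter (fun j => t < p0 (v j))).card with hG
  have Fanti : ∀ t t' : Fin d, t' ≤ t → F t ≤ F t' := by
    intro t t' h
    apply Finset.card_le_card
    intro j hj
    simp only [Finset.mem_filter] at hj ⊢
    exact ⟨hj.1, lt_of_le_of_lt h hj.2⟩
  have Ganti : ∀ t t' : Fin d, t' ≤ t → G t ≤ G t' := by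
    intro t t' h
    apply Finset.card_le_card
    intro j hj
    simp only [Finset.mem_filter] at hj ⊢
    exact ⟨hj.1, lt_of_le_of_lt h hj.2⟩
  have step1 : ∀ δ : A, F (p1 δ) = 0 := by
    intro δ
    by_contra hne
    set v₀ := F (p1 δ) with hv₀
    have hv : 0 < v₀ := Nat.pos_of_ne_zero hne
    set S : Finset A := univ.filter (fun ε => v₀ ≤ F (p1 ε)) with hSdef
    have claim1 := keane_lower_count p1 h1 (fun t => v₀ ≤ F t)
      (fun t t' h ht => le_trans ht (Fanti t t' h))
    have hSalt : S = univ.filter (fun ε => v₀ ≤ G (p0 ε)) := by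
      apply Finset.filter_congr
      intro ε _
      simp only [hF, hG, eq_iff_iff]
      rw [hEq ε]
    have claim0' := keane_lower_count p0 h0 (fun t => v₀ ≤ G t)
      (fun t t' h ht => le_trans ht (Ganti t t' h))
    set k := S.card with hk
    have claim1' : ∀ ε : A, ε ∈ S ↔ (p1 ε : ℕ) < k := claim1
    have claim0 : ∀ ε : A, ε ∈ S ↔ (p0 ε : ℕ) < k := by
      intro ε
      rw [hSalt]
      have : (univ.filter (fun ε => v₀ ≤ G (p0 ε))).card = k := by rw [hk, hSalt]
      rw [← this]
      exact claim0' ε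
    have hδS : δ ∈ S := by simp [hSdef, hv₀]
    have hk0 : 0 < k := Finset.card_pos.2 ⟨δ, hδS⟩
    obtain ⟨ε₁, hε₁⟩ := h1.2 ⟨d - 1, by omega⟩
    have hFlast : F (p1 ε₁) = 0 := by
      rw [hε₁, hF]
      simp only [Finset.card_eq_zero]
      apply Finset.filter_false_of_mem
      intro j _
      simp only [not_lt, Fin.le_def]
      have := (p1 (u j)).isLt
      omega
    have hε₁S : ε₁ ∉ S := by
      simp only [hSdef, Finset.mem_filter, Finset.mem_univ, true_and, not_le, hFlast]
      omega
    have hkd : k < d := by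
      have hlt : S ⊂ univ := Finset.ssubset_univ_iff.2 (fun hc => hε₁S (hc ▸ Finset.mem_univ ε₁))
      have := Finset.card_lt_card hlt
      rwa [Finset.card_univ, hcard] at this
    exact hadm k hk0 hkd (Set.ext fun ε => ((claim0 ε).symm.trans (claim1' ε)))
  obtain ⟨δ₀, hδ₀⟩ := h0.2 ⟨0, hd0⟩
  have hG0 : G (p0 δ₀) = 0 := by
    have h := step1 δ₀
    simp only [hF] at h
    simp only [hG]
    rw [← hEq δ₀]
    exact h
  have : j₀ ∈ (Finset.range n).filter (fun j => p0 δ₀ < p0 (v j)) := by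
    simp only [Finset.mem_filter, Finset.mem_range, hδ₀, Fin.lt_def]
    exact ⟨hj₀n, hj₀⟩
  rw [hG, Finset.card_eq_zero] at hG0
  rw [hG0] at this
  exact absurd this (Finset.notMem_empty _)

end Comb

section Main

variable {A : Type} [Fintype A] [DecidableEq A] {d : ℕ}

lemma keane_Iset_bounds {D : IEMData A d} (hD : GoodData D) {x : ℝ} {γ : A}
    (h : x ∈ Iset D γ) : 0 ≤ x ∧ x < totalLen D := by
  obtain ⟨-, -, hpos, -⟩ := hD
  have h1 := keane_aux_nonneg D.p0 D.len hpos γ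
  have h2 := keane_aux_le_total D.p0 D.len hpos γ
  obtain ⟨ha, hb⟩ := h
  unfold leftPt0 at *
  unfold totalLen
  constructor <;> linarith

lemma keane_orbit {D : IEMData A d} (hD : GoodData D) (hd0 : 0 < d)
    (T : ℝ → ℝ) (hT : IsIEMOf T D) {α : A} {x : ℝ} (hx : x ∈ Iset D α) :
    ∀ n : ℕ, ∃ g : ℕ → A, (∀ j, j < n → T^[j] x ∈ Iset D (g j)) ∧
      (0 ≤ T^[n] x ∧ T^[n] x < totalLen D) ∧
      T^[n] x = x + ∑ j ∈ Finset.range n, (leftPt1 D (g j) - leftPt0 D (g j)) := by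
  intro n
  induction n with
  | zero =>
    refine ⟨fun _ => α, by omega, ?_, by simp⟩
    simpa using keane_Iset_bounds hD hx
  | succ n ih =>
    obtain ⟨g, hmem, ⟨hb0, hb1⟩, hsum⟩ := ih
    obtain ⟨γ, hγ⟩ := keane_exists_Iset hD hd0 hb0 hb1
    have hTval : T (T^[n] x) = T^[n] x - leftPt0 D γ + leftPt1 D γ := hT γ _ hγ
    have hit : T^[n + 1] x = T (T^[n] x) := Function.iterate_succ_apply' T n x
    refine ⟨fun j => if j = n then γ else g j, ?_, ?_, ?_⟩
    · intro j hj
      rcases eq_or_ne j n with rfl | hjn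
      · simpa using hγ
      · simpa only [if_neg hjn] using hmem j (by omega)
    · obtain ⟨-, -, hpos, -⟩ := hD
      have h1 := keane_aux_nonneg D.p1 D.len hpos γ
      have h2 := keane_aux_le_total D.p1 D.len hpos γ
      obtain ⟨ha, hb⟩ := hγ
      rw [hit, hTval]
      unfold leftPt0 leftPt1 totalLen at *
      constructor <;> linarith
    · beta_reduce
      rw [hit, hTval, Finset.sum_range_succ, if_pos rfl]
      have : ∑ j ∈ Finset.range n,
          (leftPt1 D (if j = n then γ else g j) - leftPt0 D (if j = n then γ else g j))
          = ∑ j ∈ Finset.range n, (leftPt1 D (g j) - leftPt0 D (g j)) := by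
        apply Finset.sum_congr rfl
        intro j hj
        rw [if_neg (by simp at hj; omega)]
      rw [this, hsum]
      ring

end Main


open IEM in
/-- if the lengths of an interval exchange map with admissible
combinatorial data are rationally independent, then `T` satisfies Keane's
condition. -/
theorem rationally_independent_implies_keane
    {A : Type} [Fintype A] [DecidableEq A] {d : ℕ}
    (hd : 2 ≤ d) (hcard : Fintype.card A = d)
    (D : IEMData A d) (hD : GoodData D)
    (T : ℝ → ℝ) (hT : IsIEMOf T D)
    (hind : ∀ n : A → ℤ, (∑ α, (n α : ℝ) * D.len α) = 0 → ∀ α, n α = 0) :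
    KeaneCond T D := by
  intro n hn α β hα hβ heq
  obtain ⟨h0, h1, hpos, hadm⟩ := hD
  have hd0 : 0 < d := by omega
  have hxα : leftPt0 D α ∈ Iset D α := ⟨le_refl _, by have := hpos α; linarith⟩
  obtain ⟨g, hmem, -, hsum⟩ :=
    keane_orbit ⟨h0, h1, hpos, hadm⟩ hd0 T hT hxα n
  have hg0 : g 0 = α := by
    have h00 : T^[0] (leftPt0 D α) ∈ Iset D (g 0) := hmem 0 (by omega)
    rw [Function.iterate_zero_apply] at h00
    exact keane_Iset_unique ⟨h0, h1, hpos, hadm⟩ h00 hxα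
  have hβ0 : 0 < (D.p0 β : ℕ) := by
    rcases Nat.eq_zero_or_pos (D.p0 β : ℕ) with h | h
    swap
    · exact h
    · exfalso
      apply hβ
      unfold leftPt0
      apply Finset.sum_eq_zero
      intro δ hδ
      simp only [Finset.mem_filter, Fin.lt_def, h] at hδ
      omega
  rw [heq] at hsum
  -- the integer coefficient vector
  set c : A → ℤ := fun δ =>
    ((if D.p0 δ < D.p0 α then 1 else 0) +
      ∑ j ∈ Finset.range n, (if D.p1 δ < D.p1 (g j) then 1 else 0)) -
    ((if D.p0 δ < D.p0 β then 1 else 0) +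
      ∑ j ∈ Finset.range n, (if D.p0 δ < D.p0 (g j) then 1 else 0)) with hc
  have expand : ∀ (p : A → Fin d) (γ : A),
      (∑ δ, (if p δ < p γ then (1:ℝ) else 0) * D.len δ)
        = ∑ δ ∈ univ.filter (fun δ => p δ < p γ), D.len δ := by
    intro p γ
    rw [Finset.sum_filter]
    exact Finset.sum_congr rfl (fun δ _ => by split <;> simp)
  have hcsum : ∑ δ, (c δ : ℝ) * D.len δ = 0 := by
    have lhs_eq : ∑ δ, (c δ : ℝ) * D.len δ
        = (leftPt0 D α + ∑ j ∈ Finset.range n, leftPt1 D (g j)) -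
          (leftPt0 D β + ∑ j ∈ Finset.range n, leftPt0 D (g j)) := by
      simp only [hc]
      push_cast
      simp only [sub_mul, add_mul, Finset.sum_mul]
      rw [Finset.sum_sub_distrib, Finset.sum_add_distrib, Finset.sum_add_distrib,
        Finset.sum_comm (s := univ) (t := Finset.range n),
        Finset.sum_comm (s := univ) (t := Finset.range n)]
      rw [expand D.p0 α, expand D.p0 β]
      unfold leftPt0 leftPt1
      congr 2
      · apply Finset.sum_congr rfl
        intro j _
        exact expand D.p1 (g j)
      · apply Finset.sum_congr rfl
        intro j _
        exact expand D.p0 (g j)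
    rw [lhs_eq]
    rw [Finset.sum_sub_distrib] at hsum
    linarith
  have hc0 := hind c hcsum
  -- per-δ counting identity
  obtain ⟨m, rfl⟩ : ∃ m, n = m + 1 := ⟨n - 1, by omega⟩
  set v : ℕ → A := fun j => if j = m then β else g (j + 1) with hv
  have hEq : ∀ δ : A,
      ((Finset.range (m+1)).filter (fun j => D.p1 δ < D.p1 (g j))).card
        = ((Finset.range (m+1)).filter (fun j => D.p0 δ < D.p0 (v j))).card := by
    intro δ
    have h := hc0 δ
    simp only [hc, sub_eq_zero] at h
    have h1' : ∑ j ∈ Finset.range (m+1), (if D.p0 δ < D.p0 (g j) then (1:ℤ) else 0)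
        = (if D.p0 δ < D.p0 α then (1:ℤ) else 0) +
          ∑ j ∈ Finset.range m, (if D.p0 δ < D.p0 (g (j+1)) then (1:ℤ) else 0) := by
      rw [Finset.sum_range_succ']
      rw [hg0]
      ring
    have h2' : ∑ j ∈ Finset.range (m+1), (if D.p0 δ < D.p0 (v j) then (1:ℤ) else 0)
        = ∑ j ∈ Finset.range m, (if D.p0 δ < D.p0 (g (j+1)) then (1:ℤ) else 0) +
          (if D.p0 δ < D.p0 β then (1:ℤ) else 0) := by
      rw [Finset.sum_range_succ]
      have hvm : v m = β := by simp [hv]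
      have hvj : ∀ j, j < m → v j = g (j + 1) := by
        intro j hj
        simp only [hv]
        rw [if_neg (by omega)]
      rw [hvm]
      congr 1
      exact Finset.sum_congr rfl fun j hj => by
        rw [hvj j (Finset.mem_range.mp hj)]
    have key : ∑ j ∈ Finset.range (m+1), (if D.p1 δ < D.p1 (g j) then (1:ℤ) else 0)
        = ∑ j ∈ Finset.range (m+1), (if D.p0 δ < D.p0 (v j) then (1:ℤ) else 0) := by
      rw [h2']
      linarith [h, h1']
    rw [Finset.sum_boole, Finset.sum_boole] at key
    exact_mod_cast key
  exact keane_comb D.p0 D.p1 h0 h1 hadm hcard g v (by omega)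
    ⟨m, by omega, by simp [hv, hβ0]⟩ hEq
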